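/- Let A be a noncomputable Δ⁰₂ sequence and let Φ_A be the tally functional mapping X to 1^{θ(X,0)} 0 1^{θ(X,1)} 0 ⋯ (with the output continuing as 1^ω as soon as some θ(X,n) = +∞), where θ(X,n) is the least s with X↾n = A_s↾n. Then the pushforward measure μ = λ_{Φ_A} is trivial: μ assigns measure 1 to its set of atoms, equivalently to a countable set of sequences. -/

import Mathlib

open MeasureTheory Filter

/-- Cantor space `2^ω`. -/
abbrev Cantor : Type := ℕ → Bool

/-- The first `n` bits of a sequence, as a finite binary string. -/
def pref (X : Cantor) (n : ℕ) : List Bool := List.ofFn fun i : Fin n => X i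

/-- The basic open (cylinder) set determined by a finite string `σ`. -/
def cyl (σ : List Bool) : Set Cantor := {X | pref X σ.length = σ}

/-- Partial recursiveness relative to an oracle `O : ℕ → ℕ`
(the clauses of `Nat.Partrec` plus an oracle clause). -/
inductive RecIn (O : ℕ → ℕ) : (ℕ →. ℕ) → Prop
  | zero : RecIn O (pure 0)
  | succ : RecIn O Nat.succ
  | left : RecIn O ↑fun n : ℕ => n.unpair.1
  | right : RecIn O ↑fun n : ℕ => n.unpair.2
  | oracle : RecIn O ↑O
  | pair {f g} : RecIn O f → RecIn O g → RecIn O fun n => Nat.pair <$> f n <*> g n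
  | comp {f g} : RecIn O f → RecIn O g → RecIn O fun n => g n >>= f
  | prec {f g} : RecIn O f → RecIn O g → RecIn O (Nat.unpaired fun a n =>
      n.rec (f a) fun y IH => do let i ← IH; g (Nat.pair a (Nat.pair y i)))
  | rfind {f} : RecIn O f →
      RecIn O fun a => Nat.rfind fun n => (fun m => m = 0) <$> f (Nat.pair a n)

/-- `f` is computable relative to the oracle `A ∈ 2^ω`. -/
def ComputableInOrc (A : Cantor) {α β : Type} [Primcodable α] [Primcodable β]
    (f : α → β) : Prop :=
  RecIn (fun n => (A n).toNat) fun n =>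
    Part.bind (Part.ofOption (Encodable.decode (α := α) n)) fun a =>
      Part.some (Encodable.encode (f a))

/-- `X ∈ 2^ω` is a computable sequence. -/
def ComputableSeq (X : Cantor) : Prop := Computable X

/-- A computable real: one with a computable sequence of rational approximations. -/
def ComputableReal (r : ℝ) : Prop :=
  ∃ q : ℕ → ℚ, Computable q ∧ ∀ n, |r - (q n : ℝ)| ≤ (2 : ℝ)⁻¹ ^ n

/-- A computable probability measure on Cantor space: the measures of cylinders are
uniformly computable reals. -/
def ComputableMeasure (μ : Measure Cantor) : Prop :=
  IsProbabilityMeasure μ ∧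
    ∃ q : List Bool → ℕ → ℚ, Computable₂ q ∧
      ∀ σ n, |(μ (cyl σ)).toReal - (q σ n : ℝ)| ≤ (2 : ℝ)⁻¹ ^ n

/-- A uniformly effectively open sequence of classes: each `U i` is the union of a
computable enumeration of cylinders. -/
def EffOpen (U : ℕ → Set Cantor) : Prop :=
  ∃ f : ℕ → ℕ → Option (List Bool), Computable₂ f ∧
    ∀ i, U i = ⋃ n : ℕ, Option.elim (f i n) ∅ cyl

/-- A uniformly `A`-effectively open sequence of classes. -/
def EffOpenIn (A : Cantor) (U : ℕ → Set Cantor) : Prop :=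
  ∃ f : ℕ → ℕ → Option (List Bool), ComputableInOrc A (fun p : ℕ × ℕ => f p.1 p.2) ∧
    ∀ i, U i = ⋃ n : ℕ, Option.elim (f i n) ∅ cyl

/-- A `μ`-Martin-Löf test. -/
def MLTest (μ : Measure Cantor) (U : ℕ → Set Cantor) : Prop :=
  EffOpen U ∧ ∀ i, μ (U i) ≤ (2 : ENNReal)⁻¹ ^ i

/-- `X` is `μ`-Martin-Löf random. -/
def MLRandom (μ : Measure Cantor) (X : Cantor) : Prop :=
  ∀ U : ℕ → Set Cantor, MLTest μ U → X ∉ ⋂ i, U i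

/-- A `μ`-Martin-Löf test relative to the oracle `A`. -/
def MLTestIn (A : Cantor) (μ : Measure Cantor) (U : ℕ → Set Cantor) : Prop :=
  EffOpenIn A U ∧ ∀ i, μ (U i) ≤ (2 : ENNReal)⁻¹ ^ i

/-- `X` is `μ`-Martin-Löf random relative to the oracle `A`. -/
def MLRandomIn (A : Cantor) (μ : Measure Cantor) (X : Cantor) : Prop :=
  ∀ U : ℕ → Set Cantor, MLTestIn A μ U → X ∉ ⋂ i, U i

/-- A `μ`-Schnorr test: a Martin-Löf test whose levels have measure exactly `2⁻ⁱ`. -/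
def SchnorrTest (μ : Measure Cantor) (U : ℕ → Set Cantor) : Prop :=
  EffOpen U ∧ ∀ i, μ (U i) = (2 : ENNReal)⁻¹ ^ i

/-- `X` is `μ`-Schnorr random. -/
def SchnorrRandom (μ : Measure Cantor) (X : Cantor) : Prop :=
  ∀ U : ℕ → Set Cantor, SchnorrTest μ U → X ∉ ⋂ i, U i

/-- The set of atoms of `μ`. -/
def Atoms (μ : Measure Cantor) : Set Cantor := {X | 0 < μ {X}}

/-- `lam` is the uniform (Lebesgue) measure on Cantor space. -/
def IsLebesgue (lam : Measure Cantor) : Prop :=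
  ∀ σ : List Bool, lam (cyl σ) = (2 : ENNReal)⁻¹ ^ σ.length

/-- A total (truth-table) functional: every output bit is a computable function of a
computably bounded finite initial segment of the input. -/
def TTFunctional (Φ : Cantor → Cantor) : Prop :=
  ∃ (u : ℕ → ℕ) (g : List Bool → ℕ → Bool), Computable u ∧ Computable₂ g ∧
    ∀ X n, Φ X n = g (pref X (u n)) n

/-- `B` is a Δ⁰₂ sequence: it has a uniformly computable approximation converging
pointwise to it. -/
def Delta02 (B : Cantor) : Prop :=
  ∃ Bs : ℕ → Cantor, Computable₂ (fun s n => Bs s n) ∧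
    ∀ n, ∃ N, ∀ s, N ≤ s → Bs s n = B n

/-- `theta As X n` is the least stage `s` with `X↾n = As s↾n`, and `⊤ = +∞` if there
is no such stage. -/
noncomputable def theta (As : ℕ → Cantor) (X : Cantor) (n : ℕ) : ℕ∞ :=
  sInf {e : ℕ∞ | ∃ s : ℕ, e = (s : ℕ∞) ∧ pref X n = pref (As s) n}

open Classical in
/-- The tally functional determined by the approximation `As`: the output is
`1^{θ(X,0)} 0 1^{θ(X,1)} 0 ⋯`, continuing with `1^ω` as soon as some `θ(X,n) = +∞`
(position `k` is a `0` exactly when `k = θ(X,0) + ⋯ + θ(X,m) + m` for some `m`). -/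
noncomputable def tally (As : ℕ → Cantor) (X : Cantor) : Cantor := fun k =>
  if ∃ m : ℕ, (k : ℕ∞) = (∑ i ∈ Finset.range (m + 1), theta As X i) + (m : ℕ∞)
    then false else true

/-- The join `A ⊕ B` of two sequences. -/
def join (A B : Cantor) : Cantor := fun k => if k % 2 = 0 then A (k / 2) else B (k / 2)
lemma pref_eq_iff {X Y : Cantor} {n : ℕ} : pref X n = pref Y n ↔ ∀ i, i < n → X i = Y i := by
  unfold pref
  rw [List.ofFn_inj]
  constructor
  · intro h i hi; exact congrFun h ⟨i, hi⟩
  · intro h; funext i; exact h i i.2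

lemma pref_prefix {X Y : Cantor} {k n : ℕ} (h : pref X k = pref Y k) (hn : n ≤ k) :
    pref X n = pref Y n := by
  rw [pref_eq_iff] at h ⊢; exact fun i hi => h i (lt_of_lt_of_le hi hn)

lemma theta_congr {As : ℕ → Cantor} {X Y : Cantor} {n : ℕ} (h : pref X n = pref Y n) :
    theta As X n = theta As Y n := by
  unfold theta; rw [h]

lemma tally_congr (As : ℕ → Cantor) {X Y : Cantor} {k : ℕ} (h : pref X k = pref Y k) :
    tally As X k = tally As Y k := by
  classical
  have key : ∀ Z W : Cantor, (∀ i, i ≤ k → theta As Z i = theta As W i) →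
      (∃ m : ℕ, (k : ℕ∞) = (∑ i ∈ Finset.range (m + 1), theta As Z i) + (m : ℕ∞)) →
      (∃ m : ℕ, (k : ℕ∞) = (∑ i ∈ Finset.range (m + 1), theta As W i) + (m : ℕ∞)) := by
    rintro Z W hZW ⟨m, hm⟩
    have hmk : m ≤ k := by
      have : (m : ℕ∞) ≤ (k : ℕ∞) := by rw [hm]; exact le_add_self
      exact_mod_cast this
    refine ⟨m, ?_⟩
    rw [hm]
    congr 1
    apply Finset.sum_congr rfl
    intro i hi
    exact hZW i (le_trans (Nat.lt_succ_iff.mp (Finset.mem_range.mp hi)) hmk)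
  have hth : ∀ i, i ≤ k → theta As X i = theta As Y i :=
    fun i hi => theta_congr (pref_prefix h hi)
  have hiff := Iff.intro (key X Y hth) (key Y X fun i hi => (hth i hi).symm)
  simp only [tally]
  exact if_congr hiff rfl rfl

lemma tally_measurable (As : ℕ → Cantor) : Measurable (tally As) := by
  apply measurable_pi_lambda
  intro k
  have key : (fun X => tally As X k) =
      (fun v : Fin k → Bool => tally As (fun j => if h : j < k then v ⟨j, h⟩ else false) k) ∘
        (fun X (i : Fin k) => X i) := by
    funext X
    apply tally_congr
    rw [pref_eq_iff]
    intro i hi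
    simp [hi]
  rw [key]
  exact (measurable_of_countable _).comp (measurable_pi_lambda _ fun i => measurable_pi_apply _)

lemma theta_ne_top {As : ℕ → Cantor} {X : Cantor} {n : ℕ} (h : theta As X n ≠ ⊤) :
    ∃ s, pref X n = pref (As s) n := by
  by_contra hc
  push_neg at hc
  apply h
  unfold theta
  convert sInf_empty
  · rfl
  rw [Set.eq_empty_iff_forall_notMem]
  rintro e ⟨s, _, hp⟩
  exact hc s hp

lemma eq_of_agree {A : Cantor} {As : ℕ → Cantor}
    (hconv : ∀ n, ∃ N, ∀ s, N ≤ s → As s n = A n) {X : Cantor}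
    (hagree : ∀ n, ∃ s, pref X n = pref (As s) n) (hX : ∀ s, X ≠ As s) : X = A := by
  funext i
  obtain ⟨N, hN⟩ := hconv i
  choose f hf using fun s => Function.ne_iff.mp (hX s)
  set n := max (i + 1) ((Finset.range N).sup f + 1) with hn
  obtain ⟨s, hs⟩ := hagree n
  rw [pref_eq_iff] at hs
  rcases lt_or_ge s N with h | h
  · exact absurd (hs (f s) (lt_of_le_of_lt (Finset.le_sup (Finset.mem_range.mpr h))
      (lt_of_lt_of_le (Nat.lt_succ_self _) (le_max_right _ _)))) (hf s)
  · rw [hs i (lt_of_lt_of_le (Nat.lt_succ_self i) (le_max_left _ _)), hN s h]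

lemma ev_true {As : ℕ → Cantor} {X : Cantor} (h : ∃ n, theta As X n = ⊤) :
    ∃ K, ∀ k, K ≤ k → tally As X k = true := by
  classical
  set n := Nat.find h with hn
  have hnt : theta As X n = ⊤ := Nat.find_spec h
  have hlt : ∀ i, i < n → theta As X i ≠ ⊤ := fun i hi => Nat.find_min h hi
  set S := ∑ i ∈ Finset.range n, theta As X i with hS
  have hSt : S ≠ ⊤ := by
    rw [hS]
    refine WithTop.sum_ne_top.mpr ?_
    intro i hi
    exact hlt i (Finset.mem_range.mp hi)
  refine ⟨S.toNat + n, ?_⟩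
  intro k hk
  simp only [tally]
  rw [if_neg]
  rintro ⟨m, hm⟩
  rcases lt_or_ge m n with hmn | hmn
  · have hsub : Finset.range (m + 1) ⊆ Finset.range n := Finset.range_subset_range.mpr hmn
    have h1 : (k : ℕ∞) ≤ S + (m : ℕ∞) := by
      rw [hm]
      exact add_le_add_left (Finset.sum_le_sum_of_subset hsub) _
    have h2 : S + (m : ℕ∞) < S + (n : ℕ∞) := by
      apply WithTop.add_lt_add_left hSt
      exact (by exact_mod_cast hmn : (m : ℕ∞) < (n : ℕ∞))
    have h3 : S + (n : ℕ∞) ≤ (k : ℕ∞) := by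
      rw [← ENat.coe_toNat hSt, ← Nat.cast_add]
      exact_mod_cast hk
    exact absurd (lt_of_le_of_lt h1 h2) (not_lt.mpr h3)
  · have : theta As X n ≤ ∑ i ∈ Finset.range (m + 1), theta As X i :=
      Finset.single_le_sum (fun i _ => zero_le)
        (Finset.mem_range.mpr (Nat.lt_succ_of_le hmn))
    rw [hnt, top_le_iff] at this
    rw [this, top_add] at hm
    exact ENat.coe_ne_top k hm

lemma ev_true_countable :
    {Y : Cantor | ∃ K, ∀ k, K ≤ k → Y k = true}.Countable := by
  have heq : {Y : Cantor | ∃ K, ∀ k, K ≤ k → Y k = true} =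
      ⋃ K : ℕ, {Y : Cantor | ∀ k, K ≤ k → Y k = true} := by
    ext Y; simp [Set.mem_iUnion]
  rw [heq]
  apply Set.countable_iUnion
  intro K
  apply Set.Finite.countable
  apply Set.Finite.subset (Set.finite_range
    (fun v : Fin K → Bool => (fun j => if h : j < K then v ⟨j, h⟩ else true : Cantor)))
  intro Y hY
  refine ⟨fun i => Y i, ?_⟩
  funext j
  by_cases h : j < K
  · simp [h]
  · simp only [h, dif_neg, not_false_iff]
    exact (hY j (le_of_not_gt h)).symm

/-- The pushforward of Lebesgue measure under the tally functional of a noncomputable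
Δ⁰₂ sequence is a trivial measure: its atoms have total measure `1`. -/
theorem stmt14 (lam : Measure Cantor) (hlam : IsLebesgue lam)
    (A : Cantor) (hA : ¬ ComputableSeq A) (As : ℕ → Cantor)
    (hAs : Computable₂ (fun s n => As s n))
    (hconv : ∀ n, ∃ N, ∀ s, N ≤ s → As s n = A n)
    (hne : ∀ s, As s ≠ As (s + 1)) :
    Measure.map (tally As) lam (Atoms (Measure.map (tally As) lam)) = 1 := by
  classical
  set μ := Measure.map (tally As) lam with hmu
  have hmeas : Measurable (tally As) := tally_measurable As
  have huniv : lam Set.univ = 1 := by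
    have h0 : cyl [] = Set.univ := by
      ext X
      simp [cyl, pref]
    have := hlam []
    rw [h0] at this
    simpa using this
  set T := {Y : Cantor | ∃ K, ∀ k, K ≤ k → Y k = true} with hT
  set C := (tally As '' ({A} ∪ Set.range As)) ∪ T with hCdef
  have hCc : C.Countable :=
    (((Set.countable_singleton A).union (Set.countable_range As)).image _).union
      ev_true_countable
  have hrange : ∀ X, tally As X ∈ C := by
    intro X
    by_cases h : ∀ n, theta As X n ≠ ⊤
    · left
      have hagree : ∀ n, ∃ s, pref X n = pref (As s) n := fun n => theta_ne_top (h n)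
      by_cases hX : ∀ s, X ≠ As s
      · exact ⟨X, Or.inl (eq_of_agree hconv hagree hX), rfl⟩
      · push_neg at hX
        obtain ⟨s, hs⟩ := hX
        exact ⟨X, Or.inr ⟨s, hs.symm⟩, rfl⟩
    · right
      push_neg at h
      exact ev_true h
  have hCm : MeasurableSet C := hCc.measurableSet
  have hmuC : μ C = 1 := by
    rw [hmu, Measure.map_apply hmeas hCm]
    have hpre : tally As ⁻¹' C = Set.univ := Set.eq_univ_of_forall hrange
    rw [hpre, huniv]
  have hmuuniv : μ Set.univ = 1 := by
    rw [hmu, Measure.map_apply hmeas MeasurableSet.univ, Set.preimage_univ, huniv]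
  have hnull : μ (C \ Atoms μ) = 0 := by
    have hc : (C \ Atoms μ).Countable := hCc.mono Set.diff_subset
    have hz : ∀ x ∈ C \ Atoms μ, μ {x} = 0 := by
      intro x hx
      have hx2 := hx.2
      simp only [Atoms, Set.mem_setOf_eq, not_lt, le_zero_iff] at hx2
      exact hx2
    have : μ (⋃ x ∈ C \ Atoms μ, {x}) = 0 := (measure_biUnion_null_iff hc).mpr hz
    rwa [Set.biUnion_of_singleton] at this
  have h1 : (1 : ENNReal) ≤ μ (Atoms μ) := by
    calc (1 : ENNReal) = μ C := hmuC.symm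
      _ ≤ μ ((C ∩ Atoms μ) ∪ (C \ Atoms μ)) := measure_mono (by
          intro x hx
          by_cases h : x ∈ Atoms μ
          exacts [Or.inl ⟨hx, h⟩, Or.inr ⟨hx, h⟩])
      _ ≤ μ (C ∩ Atoms μ) + μ (C \ Atoms μ) := measure_union_le _ _
      _ = μ (C ∩ Atoms μ) := by rw [hnull, add_zero]
      _ ≤ μ (Atoms μ) := measure_mono Set.inter_subset_right
  exact le_antisymm (hmuuniv ▸ measure_mono (Set.subset_univ _)) h1
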